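/- Let G be a finitely generated group and H ≠ 1 a finite group, and let K be the kernel of the projection H≀G → G, equipped with the metric induced from the word metric on H≀G (generating set (H∖{1}) ∪ S with S a finite generating set of G). If γ is the growth function of G, then the function D(r) := (2r+1)·γ(r) is a 0-dimensional control function of K. -/

import Mathlib

open Function SemidirectProduct ENNReal

noncomputable section

/-- Word length of `g` with respect to a symmetrized generating set `S`. -/
def wordLength {G : Type*} [Group G] (S : Set G) (g : G) : ℕ :=
  sInf {m | ∃ w : List G, w.length = m ∧ (∀ x ∈ w, x ∈ S ∨ x⁻¹ ∈ S) ∧ w.prod = g}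

/-- The word metric on a group. -/
def wordDist {G : Type*} [Group G] (S : Set G) (g h : G) : ℝ :=
  wordLength S (g⁻¹ * h)

/-- Growth function: the number of elements in the open ball `B(1,r)` of the word metric. -/
def growth {G : Type*} [Group G] (S : Set G) (r : ℝ) : ℕ :=
  Nat.card {g : G | (wordLength S g : ℝ) < r}

/-- `x` and `y` are in the same `r`-component of `A ⊆ X` (distance function `d`):
they are joined by an `r`-path inside `A`. -/
def ChainIn {X : Type*} (d : X → X → ℝ) (A : Set X) (r : ℝ) (x y : X) : Prop :=
  ∃ (m : ℕ) (c : Fin (m + 1) → X), (∀ i, c i ∈ A) ∧ c 0 = x ∧ c (Fin.last m) = y ∧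
    ∀ i : Fin m, d (c i.castSucc) (c i.succ) < r

/-- `D` is an `n`-dimensional control function for the distance function `d` on `X`:
for every `r > 0` there is a cover by `n+1` sets of Lebesgue number at least `r`
whose `r`-components have diameter at most `D r`. -/
def IsControlFunction {X : Type*} (d : X → X → ℝ) (n : ℕ) (D : ℝ → ℝ≥0∞) : Prop :=
  ∀ r : ℝ, 0 < r → ∃ P : Fin (n + 1) → Set X,
    (⋃ i, P i) = Set.univ ∧
    (∀ x : X, ∃ i, {y | d x y < r} ⊆ P i) ∧
    ∀ i, ∀ x ∈ P i, ∀ y ∈ P i, ChainIn d (P i) r x y → ENNReal.ofReal (d x y) ≤ D r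

/-- `dim_AN(X,d) ≤ n`: there is an `n`-dimensional control function which is a dilation. -/
def ANdimLE {X : Type*} (d : X → X → ℝ) (n : ℕ) : Prop :=
  ∃ C : ℝ, 0 < C ∧ IsControlFunction d n fun r => ENNReal.ofReal (C * r)

/-- `f` weakly dominates `g`. -/
def WeaklyDominates (f g : ℝ → ℝ) : Prop :=
  ∃ lam C : ℝ, 1 ≤ lam ∧ 0 ≤ C ∧ ∀ t : ℝ, 0 ≤ t → g t ≤ lam * f (lam * t + C) + C

/-- The base group of the restricted wreath product `H ≀ G`:
finitely supported functions `G → H` under pointwise multiplication. -/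
def WreathBase (H G : Type*) [Group H] [Group G] : Subgroup (G → H) where
  carrier := {f | (Function.mulSupport f).Finite}
  one_mem' := by simp [Function.mulSupport_one]
  mul_mem' {a b} ha hb := ((ha.union hb).subset (Function.mulSupport_mul a b))
  inv_mem' {a} ha := by simpa [Function.mulSupport_inv] using ha

variable (H G : Type*) [Group H] [Group G]

/-- The shift action of `b : G` on the base group, `(b • f) γ = f (b⁻¹ γ)`. -/
def wreathShift (b : G) : WreathBase H G ≃* WreathBase H G where
  toFun f := ⟨fun x => f.1 (b⁻¹ * x), by
    have h : Function.mulSupport (fun x => f.1 (b⁻¹ * x)) ⊆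
        (fun x : G => b⁻¹ * x) ⁻¹' Function.mulSupport f.1 := fun x hx => hx
    exact (f.2.preimage ((mul_right_injective b⁻¹).injOn)).subset h⟩
  invFun f := ⟨fun x => f.1 (b * x), by
    have h : Function.mulSupport (fun x => f.1 (b * x)) ⊆
        (fun x : G => b * x) ⁻¹' Function.mulSupport f.1 := fun x hx => hx
    exact (f.2.preimage ((mul_right_injective b).injOn)).subset h⟩
  left_inv f := by ext x; simp
  right_inv f := by ext x; simp
  map_mul' f g := rfl

/-- The action of `G` on the base group of the wreath product. -/
def wreathAct : G →* MulAut (WreathBase H G) where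
  toFun := wreathShift H G
  map_one' := by
    refine MulEquiv.ext fun f => Subtype.ext (funext fun x => ?_)
    simp [wreathShift]
  map_mul' a b := by
    refine MulEquiv.ext fun f => Subtype.ext (funext fun x => ?_)
    simp [wreathShift, mul_assoc]

/-- The restricted wreath product `H ≀ G`. -/
abbrev Wreath := WreathBase H G ⋊[wreathAct H G] G

/-- The element of the base group supported at `1` with value `a`. -/
def atOne (a : H) : WreathBase H G :=
  letI := Classical.decEq G
  ⟨fun x => if x = 1 then a else 1, Set.Finite.subset (Set.finite_singleton 1) (by
    intro x hx
    simp only [Function.mem_mulSupport] at hx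
    simp only [Set.mem_singleton_iff]
    by_contra h
    exact hx (if_neg h))⟩

/-- The `(g,a)`-bulb `g·a·g⁻¹` in `H ≀ G`. -/
def bulb (g : G) (a : H) : Wreath H G :=
  inr g * inl (atOne H G a) * (inr g)⁻¹

/-- The generating set `(H ∖ {1}) ∪ S` of `H ≀ G`. -/
def wreathGen (S : Set G) : Set (Wreath H G) :=
  {w | ∃ a : H, a ≠ 1 ∧ w = inl (atOne H G a)} ∪ {w | ∃ s ∈ S, w = inr s}

/-- The word metric on `H ≀ G` with respect to the generating set `(H ∖ {1}) ∪ S`. -/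
def wreathDist (S : Set G) (x y : Wreath H G) : ℝ :=
  wordLength (wreathGen H G S) (x⁻¹ * y)

/-- The metric on the kernel `K` of `H ≀ G → G` induced from the word metric on `H ≀ G`. -/
def kerDist (S : Set G) (x y : (rightHom : Wreath H G →* G).ker) : ℝ :=
  wreathDist H G S x.1 y.1


namespace Statement8Aux

/-! ### Generic word length lemmas -/

section Words

variable {G' : Type*} [Group G'] {S : Set G'}

/-- `g` is a product of at most `n` generators or inverses of generators. -/
def HasWord (S : Set G') (g : G') (n : ℕ) : Prop :=
  ∃ w : List G', w.length ≤ n ∧ (∀ x ∈ w, x ∈ S ∨ x⁻¹ ∈ S) ∧ w.prod = g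

theorem HasWord.wordLength_le {g : G'} {n : ℕ} (h : HasWord S g n) :
    wordLength S g ≤ n := by
  obtain ⟨w, hlen, hmem, hprod⟩ := h
  exact le_trans (Nat.sInf_le ⟨w, rfl, hmem, hprod⟩) hlen

theorem HasWord.mono {g : G'} {n n' : ℕ} (hn : n ≤ n') (h : HasWord S g n) :
    HasWord S g n' := by
  obtain ⟨w, hlen, hmem, hprod⟩ := h
  exact ⟨w, hlen.trans hn, hmem, hprod⟩

theorem HasWord.one : HasWord S (1 : G') 0 :=
  ⟨[], by simp, by simp, by simp⟩

theorem HasWord.mul {g h : G'} {m n : ℕ} (hg : HasWord S g m) (hh : HasWord S h n) :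
    HasWord S (g * h) (m + n) := by
  obtain ⟨w1, hl1, hm1, hp1⟩ := hg
  obtain ⟨w2, hl2, hm2, hp2⟩ := hh
  refine ⟨w1 ++ w2, by simpa using Nat.add_le_add hl1 hl2, ?_, by simp [hp1, hp2]⟩
  intro x hx
  rcases List.mem_append.1 hx with h | h
  · exact hm1 x h
  · exact hm2 x h

theorem HasWord.inv {g : G'} {n : ℕ} (hg : HasWord S g n) : HasWord S g⁻¹ n := by
  obtain ⟨w, hlen, hmem, hprod⟩ := hg
  refine ⟨(w.map fun x => x⁻¹).reverse, by simpa using hlen, ?_, ?_⟩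
  · intro x hx
    simp only [List.mem_reverse, List.mem_map] at hx
    obtain ⟨y, hy, rfl⟩ := hx
    rcases hmem y hy with h | h
    · exact Or.inr (by simpa using h)
    · exact Or.inl h
  · rw [← List.prod_inv_reverse, hprod]

theorem hasWord_of_gen {x : G'} (hx : x ∈ S ∨ x⁻¹ ∈ S) : HasWord S x 1 :=
  ⟨[x], by simp, by simpa using hx, by simp⟩

theorem wordLength_one : wordLength S (1 : G') = 0 :=
  Nat.le_zero.1 (HasWord.one.wordLength_le)

/-- If `S` generates, every element has a word realizing its word length. -/
theorem exists_word (hSgen : Subgroup.closure S = ⊤) (g : G') :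
    HasWord S g (wordLength S g) := by
  have hg : g ∈ (Subgroup.closure S).toSubmonoid := by rw [hSgen]; trivial
  rw [Subgroup.closure_toSubmonoid] at hg
  obtain ⟨l, hmem, hprod⟩ := Submonoid.exists_list_of_mem_closure hg
  have hne : {m | ∃ w : List G', w.length = m ∧ (∀ x ∈ w, x ∈ S ∨ x⁻¹ ∈ S) ∧ w.prod = g}.Nonempty := by
    refine ⟨l.length, l, rfl, ?_, hprod⟩
    intro x hx
    rcases hmem x hx with h | h
    · exact Or.inl h
    · exact Or.inr (Set.mem_inv.1 h)
  obtain ⟨w, hlen, hm, hp⟩ := Nat.sInf_mem hne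
  exact ⟨w, le_of_eq hlen, hm, hp⟩

theorem wordLength_gen_mul (hSgen : Subgroup.closure S = ⊤) {t : G'}
    (ht : t ∈ S ∨ t⁻¹ ∈ S) (g : G') :
    wordLength S (t * g) ≤ wordLength S g + 1 := by
  have := (hasWord_of_gen ht).mul (exists_word hSgen g)
  exact this.wordLength_le.trans (by omega)

/-- Balls for the word metric of a finite generating set are finite. -/
theorem ball_finite (hSfin : S.Finite) (hSgen : Subgroup.closure S = ⊤) (r : ℝ) :
    {g : G' | (wordLength S g : ℝ) < r}.Finite := by
  classical
  set T : Set G' := S ∪ S⁻¹ with hT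
  have hTfin : T.Finite := hSfin.union hSfin.inv
  haveI := hTfin.to_subtype
  set N : ℕ := ⌈r⌉₊ with hN
  have hfin : {l : List ↥T | l.length ≤ N}.Finite := List.finite_length_le ↥T N
  refine Set.Finite.subset (hfin.image fun l => (l.map Subtype.val).prod) ?_
  intro g hg
  simp only [Set.mem_setOf_eq] at hg
  obtain ⟨w, hlen, hmem, hprod⟩ := exists_word hSgen g
  have hlenN : w.length ≤ N := by
    have h1 : (w.length : ℝ) < r := lt_of_le_of_lt (by exact_mod_cast hlen) hg
    have h2 : (w.length : ℝ) ≤ (N : ℝ) := le_trans (le_of_lt h1) (Nat.le_ceil r)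
    exact_mod_cast h2
  have hmemT : ∀ x ∈ w, x ∈ T := by
    intro x hx
    rcases hmem x hx with h | h
    · exact Or.inl h
    · exact Or.inr (Set.mem_inv.2 h)
  refine ⟨w.attach.map fun x => (⟨x.1, hmemT x.1 x.2⟩ : ↥T), ?_, ?_⟩
  · simpa using hlenN
  · have : (List.map (fun x => ((⟨x.1, hmemT x.1 x.2⟩ : ↥T) : G')) w.attach) = w := by
      simp
    simp only [List.map_map]
    rw [show (List.map ((fun x : ↥T => (x : G')) ∘ fun x : {y // y ∈ w} =>
        (⟨x.1, hmemT x.1 x.2⟩ : ↥T)) w.attach) = (List.map (fun x =>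
        ((⟨x.1, hmemT x.1 x.2⟩ : ↥T) : G')) w.attach) from rfl, this, hprod]

end Words

/-! ### Wreath product lemmas -/

section Wreath

variable {H G : Type*} [Group H] [Group G] {S : Set G}

/-- The delta function at `γ` with value `a`. -/
def delta (γ : G) (a : H) : WreathBase H G := wreathAct H G γ (atOne H G a)

theorem delta_apply_self (γ : G) (a : H) : (delta γ a).1 γ = a := by
  show (atOne H G a).1 (γ⁻¹ * γ) = a
  simp [atOne]

theorem delta_apply_ne {γ x : G} (h : x ≠ γ) (a : H) : (delta γ a).1 x = 1 := by
  show (atOne H G a).1 (γ⁻¹ * x) = 1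
  have : γ⁻¹ * x ≠ 1 := by
    intro hc
    exact h (by rw [← one_mul x, ← mul_inv_cancel γ, mul_assoc, hc, mul_one])
  simp [atOne, this]

theorem bulb_eq_inl_delta (γ : G) (a : H) :
    bulb H G γ a = SemidirectProduct.inl (delta γ a) := by
  rw [bulb, delta, SemidirectProduct.inl_aut]
  rw [map_inv]

theorem atOne_one : atOne H G (1 : H) = 1 := by
  refine Subtype.ext (funext fun x => ?_)
  simp [atOne]

theorem mulSupport_atOne (a : H) : Function.mulSupport (atOne H G a).1 ⊆ {1} := by
  intro x hx
  simp only [Function.mem_mulSupport] at hx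
  by_contra h
  have hx1 : x ≠ 1 := by simpa using h
  exact hx (by simp [atOne, hx1])

theorem hasWord_inr (hSgen : Subgroup.closure S = ⊤) (γ : G) :
    HasWord (wreathGen H G S) (SemidirectProduct.inr γ : Wreath H G) (wordLength S γ) := by
  obtain ⟨w, hlen, hmem, hprod⟩ := exists_word hSgen γ
  refine ⟨w.map (SemidirectProduct.inr), by simpa using hlen, ?_, ?_⟩
  · intro x hx
    simp only [List.mem_map] at hx
    obtain ⟨y, hy, rfl⟩ := hx
    rcases hmem y hy with h | h
    · exact Or.inl (Or.inr ⟨y, h, rfl⟩)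
    · refine Or.inr (Or.inr ⟨y⁻¹, h, ?_⟩)
      rw [map_inv]
  · rw [List.prod_hom w (SemidirectProduct.inr : G →* Wreath H G), hprod]

theorem hasWord_atOne (a : H) :
    HasWord (wreathGen H G S) (SemidirectProduct.inl (atOne H G a) : Wreath H G) 1 := by
  by_cases ha : a = 1
  · subst ha
    rw [atOne_one, map_one]
    exact HasWord.one.mono (by omega)
  · exact hasWord_of_gen (Or.inl (Or.inl ⟨a, ha, rfl⟩))

theorem hasWord_delta (hSgen : Subgroup.closure S = ⊤) (γ : G) (a : H) :
    HasWord (wreathGen H G S) (SemidirectProduct.inl (delta γ a) : Wreath H G)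
      (2 * wordLength S γ + 1) := by
  rw [← bulb_eq_inl_delta, bulb]
  have h1 := hasWord_inr (H := H) (S := S) hSgen γ
  have h2 := hasWord_atOne (S := S) a
  have := (h1.mul h2).mul h1.inv
  exact this.mono (by omega)

theorem hasWord_inl (hSgen : Subgroup.closure S = ⊤) (F : Finset G) :
    ∀ f : WreathBase H G, Function.mulSupport f.1 ⊆ ↑F →
      HasWord (wreathGen H G S) (SemidirectProduct.inl f : Wreath H G)
        (∑ γ ∈ F, (2 * wordLength S γ + 1)) := by
  classical
  induction F using Finset.induction_on with
  | empty =>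
    intro f hf
    have : f = 1 := by
      refine Subtype.ext (funext fun x => ?_)
      by_contra h
      exact absurd (hf h) (by simp)
    rw [this, map_one]
    simpa using HasWord.one
  | @insert γ F hγ ih =>
    intro f hf
    set g : WreathBase H G := delta γ (f.1 γ) with hg
    have hsup : Function.mulSupport (g⁻¹ * f).1 ⊆ ↑F := by
      intro x hx
      simp only [Function.mem_mulSupport] at hx
      have hval : (g⁻¹ * f).1 x = (g.1 x)⁻¹ * f.1 x := rfl
      by_cases hx1 : x = γ
      · exfalso
        subst hx1
        rw [hval, hg, delta_apply_self] at hx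
        simp at hx
      · rw [hval, delta_apply_ne hx1] at hx
        simp only [inv_one, one_mul] at hx
        have := hf hx
        simp only [Finset.coe_insert, Set.mem_insert_iff] at this
        exact this.resolve_left hx1
    have h1 := hasWord_delta (S := S) hSgen γ (f.1 γ)
    have h2 := ih (g⁻¹ * f) hsup
    have h3 := h1.mul h2
    rw [← map_mul, mul_inv_cancel_left] at h3
    rw [Finset.sum_insert hγ]
    exact h3

/-- Every element with finitely supported invariants has a word: the set defining
the word length is nonempty. -/
theorem exists_word_wreath (hSgen : Subgroup.closure S = ⊤) (w : Wreath H G) :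
    HasWord (wreathGen H G S) w
      (wordLength (wreathGen H G S) w) := by
  classical
  have hdec : w = SemidirectProduct.inl w.left * SemidirectProduct.inr w.right := by
    ext <;> simp
  have h1 := hasWord_inl (H := H) hSgen w.left.2.toFinset w.left
    (by simp [Set.Finite.coe_toFinset]; exact fun x hx => (Set.Finite.mem_toFinset _).2 hx)
  have h2 := hasWord_inr (H := H) (S := S) hSgen w.right
  have h3 := h1.mul h2
  rw [← hdec] at h3
  obtain ⟨l, hlen, hmem, hprod⟩ := h3
  have hne : {m | ∃ u : List (Wreath H G), u.length = m ∧
      (∀ x ∈ u, x ∈ wreathGen H G S ∨ x⁻¹ ∈ wreathGen H G S) ∧ u.prod = w}.Nonempty :=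
    ⟨l.length, l, rfl, hmem, hprod⟩
  obtain ⟨u, hlen', hm, hp⟩ := Nat.sInf_mem hne
  exact ⟨u, le_of_eq hlen', hm, hp⟩

theorem gen_cases {x : Wreath H G}
    (hx : x ∈ wreathGen H G S ∨ x⁻¹ ∈ wreathGen H G S) :
    (∃ φ : WreathBase H G, Function.mulSupport φ.1 ⊆ {1} ∧ x = SemidirectProduct.inl φ) ∨
    (∃ t : G, (t ∈ S ∨ t⁻¹ ∈ S) ∧ x = SemidirectProduct.inr t) := by
  rcases hx with hx | hx
  · rcases hx with ⟨a, _, rfl⟩ | ⟨s, hs, rfl⟩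
    · exact Or.inl ⟨atOne H G a, mulSupport_atOne a, rfl⟩
    · exact Or.inr ⟨s, Or.inl hs, rfl⟩
  · rcases hx with ⟨a, _, ha⟩ | ⟨s, hs, hs'⟩
    · refine Or.inl ⟨(atOne H G a)⁻¹, ?_, ?_⟩
      · intro x hx
        apply mulSupport_atOne a
        simp only [Function.mem_mulSupport] at hx ⊢
        intro h
        refine hx ?_
        show ((atOne H G a).1 x)⁻¹ = 1
        rw [h, inv_one]
      · rw [map_inv, ← ha, inv_inv]
    · refine Or.inr ⟨s⁻¹, Or.inr (by simpa using hs), ?_⟩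
      rw [map_inv, ← hs', inv_inv]

/-- Key lower bound: if the left part of a word's product is nontrivial at `γ`, then `γ`
has word length at most the length of the word. -/
theorem support_le (hSgen : Subgroup.closure S = ⊤) :
    ∀ w : List (Wreath H G),
      (∀ x ∈ w, x ∈ wreathGen H G S ∨ x⁻¹ ∈ wreathGen H G S) →
      ∀ γ : G, (w.prod.left).1 γ ≠ 1 → wordLength S γ ≤ w.length := by
  intro w
  induction w with
  | nil =>
    intro _ γ hγ
    simp at hγ
  | cons x w ih =>
    intro hmem γ hγ
    have hx := gen_cases (S := S) (hmem x (by simp))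
    have hw : ∀ y ∈ w, y ∈ wreathGen H G S ∨ y⁻¹ ∈ wreathGen H G S :=
      fun y hy => hmem y (by simp [hy])
    rw [List.prod_cons] at hγ
    rcases hx with ⟨φ, hφ, rfl⟩ | ⟨t, ht, rfl⟩
    · have hleft : ((SemidirectProduct.inl φ * w.prod).left).1 γ = φ.1 γ * (w.prod.left).1 γ := by
        simp
      rw [hleft] at hγ
      by_cases h1 : φ.1 γ = 1
      · rw [h1, one_mul] at hγ
        exact (ih hw γ hγ).trans (by simp)
      · have : γ = 1 := hφ h1
        subst this
        rw [wordLength_one]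
        exact Nat.zero_le _
    · have hleft : ((SemidirectProduct.inr t * w.prod).left).1 γ = (w.prod.left).1 (t⁻¹ * γ) := by
        rw [SemidirectProduct.mul_left, SemidirectProduct.left_inr, one_mul]; rfl
      rw [hleft] at hγ
      have h1 := ih hw (t⁻¹ * γ) hγ
      have h2 : wordLength S γ ≤ wordLength S (t⁻¹ * γ) + 1 := by
        have := wordLength_gen_mul hSgen ht (t⁻¹ * γ)
        rwa [mul_inv_cancel_left] at this
      simp only [List.length_cons]
      omega

theorem step_supp (hSgen : Subgroup.closure S = ⊤) {g : Wreath H G} {r : ℝ}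
    (hg : (wordLength (wreathGen H G S) g : ℝ) < r) :
    ∀ γ : G, (g.left).1 γ ≠ 1 → (wordLength S γ : ℝ) < r := by
  intro γ hγ
  obtain ⟨w, hlen, hmem, hprod⟩ := exists_word_wreath (S := S) hSgen g
  have := support_le hSgen w hmem γ (by rwa [hprod])
  calc (wordLength S γ : ℝ) ≤ (w.length : ℝ) := by exact_mod_cast this
    _ ≤ (wordLength (wreathGen H G S) g : ℝ) := by exact_mod_cast hlen
    _ < r := hg

end Wreath

end Statement8Aux


/-- `G` finitely generated, `H ≠ 1` finite, `K` the kernel of `H ≀ G → G` with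
the metric induced from the word metric of the generating set `(H∖{1}) ∪ S`.  If `γ` is the
growth function of `G`, then `D(r) = (2r+1)·γ(r)` is a `0`-dimensional control function of `K`. -/
theorem statement_8 {H G : Type*} [Group H] [Finite H] [Nontrivial H] [Group G]
    (S : Set G) (hSfin : S.Finite) (hSgen : Subgroup.closure S = ⊤) :
    IsControlFunction (kerDist H G S) 0
      (fun r => ENNReal.ofReal ((2 * r + 1) * growth S r)) := by
  classical
  intro r hr
  refine ⟨fun _ => Set.univ, Set.eq_univ_of_univ_subset (Set.subset_iUnion (fun _ : Fin 1 => (Set.univ : Set _)) 0), fun x => ⟨0, Set.subset_univ _⟩, ?_⟩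
  intro i x _ y _ hchain
  obtain ⟨m, c, _, hc0, hclast, hstep⟩ := hchain
  set B : Set G := {g : G | (wordLength S g : ℝ) < r} with hB
  have hBfin : B.Finite := Statement8Aux.ball_finite hSfin hSgen r
  set F : Finset G := hBfin.toFinset with hF
  have hright : ∀ u : (rightHom : Wreath H G →* G).ker, u.1.right = 1 := fun u => u.2
  have hdiffleft : ∀ u v : (rightHom : Wreath H G →* G).ker,
      (u.1⁻¹ * v.1).left = (u.1.left)⁻¹ * v.1.left := by
    intro u v
    simp [hright u]
  -- telescoping the chain: the difference of endpoints is supported in the ball B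
  have htel : ∀ j : ℕ, ∀ hj : j < m + 1,
      Function.mulSupport (((c 0).1.left)⁻¹ * (c ⟨j, hj⟩).1.left).1 ⊆ B := by
    intro j
    induction j with
    | zero =>
      intro hj
      have : ((c 0).1.left)⁻¹ * (c ⟨0, hj⟩).1.left = 1 := by
        have : (⟨0, hj⟩ : Fin (m + 1)) = 0 := rfl
        rw [this, inv_mul_cancel]
      rw [this]
      intro γ hγ
      simp at hγ
    | succ j ih =>
      intro hj
      have hjm : j < m := by omega
      have hj' : j < m + 1 := by omega
      set i : Fin m := ⟨j, hjm⟩ with hi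
      have hstepj := hstep i
      have hcast : i.castSucc = (⟨j, hj'⟩ : Fin (m + 1)) := rfl
      have hsucc : i.succ = (⟨j + 1, hj⟩ : Fin (m + 1)) := rfl
      rw [hcast, hsucc] at hstepj
      have hsupp2 : Function.mulSupport
          (((c ⟨j, hj'⟩).1.left)⁻¹ * (c ⟨j + 1, hj⟩).1.left).1 ⊆ B := by
        intro γ hγ
        rw [← hdiffleft] at hγ
        exact Statement8Aux.step_supp hSgen hstepj γ hγ
      have hsupp1 := ih hj'
      intro γ hγ
      have hmulval : (((c 0).1.left)⁻¹ * (c ⟨j + 1, hj⟩).1.left).1 γ =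
          ((((c 0).1.left)⁻¹ * (c ⟨j, hj'⟩).1.left).1 γ) *
          ((((c ⟨j, hj'⟩).1.left)⁻¹ * (c ⟨j + 1, hj⟩).1.left).1 γ) := by
        have : ((c 0).1.left)⁻¹ * (c ⟨j + 1, hj⟩).1.left =
            (((c 0).1.left)⁻¹ * (c ⟨j, hj'⟩).1.left) *
            (((c ⟨j, hj'⟩).1.left)⁻¹ * (c ⟨j + 1, hj⟩).1.left) := by
          group
        rw [this]; rfl
      simp only [Function.mem_mulSupport] at hγ
      rw [hmulval] at hγ
      by_cases h1 : ((((c 0).1.left)⁻¹ * (c ⟨j, hj'⟩).1.left).1 γ) = 1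
      · rw [h1, one_mul] at hγ
        exact hsupp2 hγ
      · exact hsupp1 h1
  -- the difference of x and y
  set f : WreathBase H G := (x.1.left)⁻¹ * y.1.left with hf
  have hsuppf : Function.mulSupport f.1 ⊆ B := by
    have := htel m (by omega)
    have hlast : (⟨m, by omega⟩ : Fin (m + 1)) = Fin.last m := rfl
    rw [hlast, hc0, hclast] at this
    exact this
  have hxy : x.1⁻¹ * y.1 = SemidirectProduct.inl f := by
    ext
    · rw [hdiffleft x y]; simp [hf]
    · show (x.1⁻¹ * y.1).right = 1
      simp [hright x, hright y]
  have hword := Statement8Aux.hasWord_inl (H := H) (S := S) hSgen F f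
    (by rw [hF, Set.Finite.coe_toFinset]; exact hsuppf)
  have hlen : wordLength (wreathGen H G S) (x.1⁻¹ * y.1) ≤
      ∑ γ ∈ F, (2 * wordLength S γ + 1) := by
    rw [hxy]
    exact hword.wordLength_le
  have hcard : F.card = growth S r := by
    rw [growth, Nat.card_coe_set_eq, Set.ncard_eq_toFinset_card B hBfin]
  have key : kerDist H G S x y ≤ (2 * r + 1) * (growth S r : ℝ) := by
    have h0 : kerDist H G S x y = (wordLength (wreathGen H G S) (x.1⁻¹ * y.1) : ℝ) := rfl
    rw [h0]
    calc (wordLength (wreathGen H G S) (x.1⁻¹ * y.1) : ℝ)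
        ≤ ((∑ γ ∈ F, (2 * wordLength S γ + 1) : ℕ) : ℝ) := by exact_mod_cast hlen
      _ = ∑ γ ∈ F, (2 * (wordLength S γ : ℝ) + 1) := by
          push_cast
          exact Finset.sum_congr rfl fun γ _ => by ring
      _ ≤ ∑ γ ∈ F, (2 * r + 1) := by
          refine Finset.sum_le_sum fun γ hγ => ?_
          have : (wordLength S γ : ℝ) < r := by
            have : γ ∈ B := by rwa [hF, Set.Finite.mem_toFinset] at hγ
            exact this
          nlinarith
      _ = F.card * (2 * r + 1) := by rw [Finset.sum_const]; ring
      _ = (2 * r + 1) * (growth S r : ℝ) := by rw [hcard]; ring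
  calc ENNReal.ofReal (kerDist H G S x y)
      ≤ ENNReal.ofReal ((2 * r + 1) * (growth S r : ℝ)) := ENNReal.ofReal_le_ofReal key
    _ = _ := rfl


end
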